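/- Let A ∈ ℂ^{n×n} and H ∈ ℂ^{N×N} with 1 < ‖H‖ < ‖A‖, let β > 1 and c > 0, and let g_0, …, g_{N−1} ∈ ℂ^n satisfy ‖g_ℓ‖ ≤ c ‖A‖^ℓ for 0 ≤ ℓ ≤ N−1; set G = [g_0 … g_{N−1}] ∈ ℂ^{n×N}. Let Q_1 ∈ ℂ^{n×N} and Q_2 ∈ ℂ^{N×N} satisfy Q_1* Q_1 + Q_2* Q_2 = I_N (i.e. the stacked matrix [Q_1; Q_2] has orthonormal columns), and let F ∈ ℂ^{N×N} be such that the Krylov matrix K_N(F,e_1) = [e_1, F e_1, …, F^{N−1} e_1] is invertible and F = Q_1* A Q_1 + Q_2* H Q_2 + β^{−1} Q_1* G K_N(F,e_1)^{−1}. Then for every 0 ≤ ℓ ≤ N, ‖F^ℓ e_1‖ ≤ (1 + β^{−1} c ℓ) ‖A‖^ℓ. -/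

import Mathlib

open scoped Matrix.Norms.L2Operator
open Matrix

/-- The first standard basis vector of `ℂ^N`. -/
noncomputable def e1C (N : ℕ) : Fin N → ℂ := fun j => if (j : ℕ) = 0 then 1 else 0

/-- The Krylov matrix `K_N(F, e₁) = [e₁, F e₁, …, F^(N-1) e₁]`. -/
noncomputable def krylovC {N : ℕ} (F : Matrix (Fin N) (Fin N) ℂ) : Matrix (Fin N) (Fin N) ℂ :=
  fun i j => (F ^ (j : ℕ)).mulVec (e1C N) i

/-- The Euclidean norm of a vector in `ℂ^n`. -/
noncomputable def cnorm {n : ℕ} (v : Fin n → ℂ) : ℝ :=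
  ‖(WithLp.equiv 2 (Fin n → ℂ)).symm v‖

lemma cnorm_nonneg {m : ℕ} (x : Fin m → ℂ) : 0 ≤ cnorm x := norm_nonneg _

lemma cnorm_sq {m : ℕ} (x : Fin m → ℂ) : cnorm x ^ 2 = (star x ⬝ᵥ x).re := by
  rw [cnorm, ← inner_self_eq_norm_sq (𝕜 := ℂ), WithLp.equiv_symm_apply,
    EuclideanSpace.inner_toLp_toLp, dotProduct_comm]; rfl

lemma cnorm_mulVec_le {m k : ℕ} (M : Matrix (Fin m) (Fin k) ℂ) (x : Fin k → ℂ) :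
    cnorm (M *ᵥ x) ≤ ‖M‖ * cnorm x :=
  M.l2_opNorm_mulVec ((WithLp.equiv 2 (Fin k → ℂ)).symm x)

lemma cnorm_add_le {m : ℕ} (x y : Fin m → ℂ) : cnorm (x + y) ≤ cnorm x + cnorm y := by
  simp only [cnorm, WithLp.equiv_symm_apply, WithLp.toLp_add]; exact norm_add_le _ _

lemma cnorm_smul {m : ℕ} (r : ℝ) (x : Fin m → ℂ) : cnorm (r • x) = |r| * cnorm x := by
  simp only [cnorm, WithLp.equiv_symm_apply, WithLp.toLp_smul, norm_smul, Real.norm_eq_abs]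

lemma re_dot_le {m : ℕ} (x y : Fin m → ℂ) : (star x ⬝ᵥ y).re ≤ cnorm x * cnorm y := by
  have := re_inner_le_norm (𝕜 := ℂ) ((WithLp.equiv 2 (Fin m → ℂ)).symm x)
    ((WithLp.equiv 2 (Fin m → ℂ)).symm y)
  rwa [WithLp.equiv_symm_apply, EuclideanSpace.inner_toLp_toLp, dotProduct_comm] at this

section Q
variable {n N : ℕ} {Q1 : Matrix (Fin n) (Fin N) ℂ} {Q2 : Matrix (Fin N) (Fin N) ℂ}
  (hQ : Q1ᴴ * Q1 + Q2ᴴ * Q2 = 1)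

include hQ

lemma pyth (v : Fin N → ℂ) :
    cnorm (Q1 *ᵥ v) ^ 2 + cnorm (Q2 *ᵥ v) ^ 2 = cnorm v ^ 2 := by
  have h1 : ∀ {k : ℕ} (M : Matrix (Fin k) (Fin N) ℂ),
      star (M *ᵥ v) ⬝ᵥ (M *ᵥ v) = star v ⬝ᵥ ((Mᴴ * M) *ᵥ v) := by
    intro k M
    rw [star_mulVec, ← dotProduct_mulVec, mulVec_mulVec]
  rw [cnorm_sq, cnorm_sq, cnorm_sq, h1, h1, ← Complex.add_re, ← dotProduct_add,
    ← add_mulVec, hQ, one_mulVec]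

lemma contract (a : Fin n → ℂ) (b : Fin N → ℂ) :
    cnorm (Q1ᴴ *ᵥ a + Q2ᴴ *ᵥ b) ≤ Real.sqrt (cnorm a ^ 2 + cnorm b ^ 2) := by
  set w := Q1ᴴ *ᵥ a + Q2ᴴ *ᵥ b with hw
  have key : cnorm w ^ 2 ≤ cnorm w * Real.sqrt (cnorm a ^ 2 + cnorm b ^ 2) := by
    have h1 : (star w ⬝ᵥ (Q1ᴴ *ᵥ a)).re ≤ cnorm (Q1 *ᵥ w) * cnorm a := by
      rw [dotProduct_mulVec, ← star_mulVec]; exact re_dot_le _ _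
    have h2 : (star w ⬝ᵥ (Q2ᴴ *ᵥ b)).re ≤ cnorm (Q2 *ᵥ w) * cnorm b := by
      rw [dotProduct_mulVec, ← star_mulVec]; exact re_dot_le _ _
    have hcs : cnorm (Q1 *ᵥ w) * cnorm a + cnorm (Q2 *ᵥ w) * cnorm b ≤
        Real.sqrt (cnorm (Q1 *ᵥ w) ^ 2 + cnorm (Q2 *ᵥ w) ^ 2) *
          Real.sqrt (cnorm a ^ 2 + cnorm b ^ 2) := by
      rw [← Real.sqrt_mul (by positivity)]
      have hn : 0 ≤ cnorm (Q1 *ᵥ w) * cnorm a + cnorm (Q2 *ᵥ w) * cnorm b := by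
        have := cnorm_nonneg (Q1 *ᵥ w); have := cnorm_nonneg a
        have := cnorm_nonneg (Q2 *ᵥ w); have := cnorm_nonneg b
        positivity
      rw [← Real.sqrt_sq hn]
      apply Real.sqrt_le_sqrt
      nlinarith [sq_nonneg (cnorm (Q1 *ᵥ w) * cnorm b - cnorm (Q2 *ᵥ w) * cnorm a)]
    rw [pyth hQ w, Real.sqrt_sq (cnorm_nonneg w)] at hcs
    calc cnorm w ^ 2 = (star w ⬝ᵥ w).re := cnorm_sq w
      _ = (star w ⬝ᵥ (Q1ᴴ *ᵥ a)).re + (star w ⬝ᵥ (Q2ᴴ *ᵥ b)).re := by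
          rw [hw]; rw [dotProduct_add, Complex.add_re]
      _ ≤ cnorm (Q1 *ᵥ w) * cnorm a + cnorm (Q2 *ᵥ w) * cnorm b := add_le_add h1 h2
      _ ≤ _ := hcs
    -- fix: hcs uses pyth
  rcases (cnorm_nonneg w).eq_or_lt with h | h
  · rw [← h]; exact Real.sqrt_nonneg _
  · have := key
    nlinarith [Real.sqrt_nonneg (cnorm a ^ 2 + cnorm b ^ 2)]
end Q

section Q2
variable {n N : ℕ} {Q1 : Matrix (Fin n) (Fin N) ℂ} {Q2 : Matrix (Fin N) (Fin N) ℂ}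
  (hQ : Q1ᴴ * Q1 + Q2ᴴ * Q2 = 1)
include hQ

lemma step_bound {A : Matrix (Fin n) (Fin n) ℂ} {H : Matrix (Fin N) (Fin N) ℂ}
    (hHA : ‖H‖ ≤ ‖A‖) (hA0 : 0 ≤ ‖A‖) (v : Fin N → ℂ) :
    cnorm ((Q1ᴴ * A * Q1 + Q2ᴴ * H * Q2) *ᵥ v) ≤ ‖A‖ * cnorm v := by
  have hrw : (Q1ᴴ * A * Q1 + Q2ᴴ * H * Q2) *ᵥ v =
      Q1ᴴ *ᵥ (A *ᵥ (Q1 *ᵥ v)) + Q2ᴴ *ᵥ (H *ᵥ (Q2 *ᵥ v)) := by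
    rw [add_mulVec, mulVec_mulVec, mulVec_mulVec, mulVec_mulVec, mulVec_mulVec]
  rw [hrw]
  refine (contract hQ _ _).trans ?_
  have h1 : cnorm (A *ᵥ (Q1 *ᵥ v)) ^ 2 ≤ ‖A‖ ^ 2 * cnorm (Q1 *ᵥ v) ^ 2 := by
    have := cnorm_mulVec_le A (Q1 *ᵥ v)
    nlinarith [cnorm_nonneg (A *ᵥ (Q1 *ᵥ v)), cnorm_nonneg (Q1 *ᵥ v)]
  have h2 : cnorm (H *ᵥ (Q2 *ᵥ v)) ^ 2 ≤ ‖A‖ ^ 2 * cnorm (Q2 *ᵥ v) ^ 2 := by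
    have h := cnorm_mulVec_le H (Q2 *ᵥ v)
    have h' := h.trans (mul_le_mul_of_nonneg_right hHA (cnorm_nonneg _))
    nlinarith [cnorm_nonneg (H *ᵥ (Q2 *ᵥ v)), cnorm_nonneg (Q2 *ᵥ v)]
  calc Real.sqrt (cnorm (A *ᵥ (Q1 *ᵥ v)) ^ 2 + cnorm (H *ᵥ (Q2 *ᵥ v)) ^ 2)
      ≤ Real.sqrt (‖A‖ ^ 2 * (cnorm (Q1 *ᵥ v) ^ 2 + cnorm (Q2 *ᵥ v) ^ 2)) := by
        apply Real.sqrt_le_sqrt; nlinarith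
    _ = ‖A‖ * cnorm v := by
        rw [pyth hQ v, Real.sqrt_mul (by positivity), Real.sqrt_sq hA0,
          Real.sqrt_sq (cnorm_nonneg v)]
end Q2

lemma krylov_inv_mulVec {N : ℕ} {F : Matrix (Fin N) (Fin N) ℂ} (hK : IsUnit (krylovC F))
    {l : ℕ} (hl : l < N) :
    (krylovC F)⁻¹ *ᵥ ((F ^ l) *ᵥ e1C N) = Pi.single (⟨l, hl⟩ : Fin N) 1 := by
  have h1 : (F ^ l) *ᵥ e1C N = krylovC F *ᵥ Pi.single (⟨l, hl⟩ : Fin N) (1 : ℂ) := by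
    rw [mulVec_single]; funext i; simp [krylovC]
  rw [h1, mulVec_mulVec, nonsing_inv_mul _ ((isUnit_iff_isUnit_det _).mp hK), one_mulVec]

lemma cnorm_e1C (N : ℕ) : cnorm (e1C N) ≤ 1 := by
  have : cnorm (e1C N) ^ 2 ≤ 1 := by
    rw [cnorm_sq]
    cases N with
    | zero => simp [dotProduct]
    | succ m =>
      have : star (e1C (m + 1)) ⬝ᵥ e1C (m + 1) = 1 := by
        simp only [dotProduct, e1C, Pi.star_apply]
        rw [Finset.sum_eq_single (0 : Fin (m + 1))] <;> simp +contextual [Fin.val_eq_zero_iff]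
      rw [this]; norm_num
  nlinarith [cnorm_nonneg (e1C N)]

/-- Growth bound for the Krylov powers: if `1 < ‖H‖ < ‖A‖`, `β > 1`, `c > 0`, the columns
`g_ℓ` of `G` satisfy `‖g_ℓ‖ ≤ c ‖A‖^ℓ`, `[Q₁; Q₂]` has orthonormal columns
(`Q₁* Q₁ + Q₂* Q₂ = I`), the Krylov matrix `K_N(F, e₁)` is invertible and
`F = Q₁* A Q₁ + Q₂* H Q₂ + β⁻¹ Q₁* G K_N(F, e₁)⁻¹`, then
`‖F^ℓ e₁‖ ≤ (1 + β⁻¹ c ℓ) ‖A‖^ℓ` for all `0 ≤ ℓ ≤ N`. -/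
theorem hessenberg_power_bound (n N : ℕ)
    (A : Matrix (Fin n) (Fin n) ℂ) (H : Matrix (Fin N) (Fin N) ℂ)
    (hH1 : 1 < ‖H‖) (hHA : ‖H‖ < ‖A‖)
    (β c : ℝ) (hβ : 1 < β) (hc : 0 < c)
    (G : Matrix (Fin n) (Fin N) ℂ)
    (hG : ∀ l : Fin N, cnorm (fun i => G i l) ≤ c * ‖A‖ ^ (l : ℕ))
    (Q1 : Matrix (Fin n) (Fin N) ℂ) (Q2 : Matrix (Fin N) (Fin N) ℂ)
    (hQ : Q1ᴴ * Q1 + Q2ᴴ * Q2 = 1)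
    (F : Matrix (Fin N) (Fin N) ℂ) (hK : IsUnit (krylovC F))
    (hF : F = Q1ᴴ * A * Q1 + Q2ᴴ * H * Q2 + β⁻¹ • (Q1ᴴ * G * (krylovC F)⁻¹)) :
    ∀ l : ℕ, l ≤ N →
      cnorm ((F ^ l).mulVec (e1C N)) ≤ (1 + β⁻¹ * c * l) * ‖A‖ ^ l := by
  have hA1 : (1 : ℝ) < ‖A‖ := hH1.trans hHA
  have hβ0 : (0 : ℝ) < β⁻¹ := inv_pos.mpr (by linarith)
  intro l
  induction l with
  | zero =>
    intro _
    simpa [pow_zero, one_mulVec] using cnorm_e1C N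
  | succ l ih =>
    intro hlN
    have hl : l < N := hlN
    have ihb := ih hl.le
    set x := (F ^ l) *ᵥ e1C N with hxdef
    have hx : (F ^ (l + 1)) *ᵥ e1C N = F *ᵥ x := by
      rw [hxdef, mulVec_mulVec, ← pow_succ']
    set M := Q1ᴴ * A * Q1 + Q2ᴴ * H * Q2 with hM
    set R := Q1ᴴ * G * (krylovC F)⁻¹ with hR
    have hFx : F *ᵥ x = M *ᵥ x + β⁻¹ • (R *ᵥ x) := by
      rw [hF, add_mulVec, smul_mulVec]
    have hMx : cnorm (M *ᵥ x) ≤ ‖A‖ * cnorm x :=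
      step_bound hQ hHA.le (by linarith) x
    have hg : R *ᵥ x = Q1ᴴ *ᵥ (fun i => G i ⟨l, hl⟩) := by
      rw [hR, hxdef, ← mulVec_mulVec, ← mulVec_mulVec, krylov_inv_mulVec hK hl,
        mulVec_single]
      simp; rfl
    have hRx : cnorm (R *ᵥ x) ≤ c * ‖A‖ ^ l := by
      have hcon := contract hQ (fun i => G i ⟨l, hl⟩) (0 : Fin N → ℂ)
      have h0 : cnorm (0 : Fin N → ℂ) = 0 := by
        simp [cnorm]
      rw [mulVec_zero, add_zero, h0] at hcon
      have : cnorm (R *ᵥ x) ≤ cnorm (fun i => G i ⟨l, hl⟩) := by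
        rw [hg]
        refine hcon.trans ?_
        rw [show (0:ℝ)^2 = 0 by norm_num, add_zero, Real.sqrt_sq (cnorm_nonneg _)]
      exact this.trans (hG ⟨l, hl⟩)
    have hxle : cnorm x ≤ (1 + β⁻¹ * c * l) * ‖A‖ ^ l := ihb
    have htri : cnorm (F *ᵥ x) ≤ ‖A‖ * cnorm x + β⁻¹ * (c * ‖A‖ ^ l) := by
      rw [hFx]
      refine (cnorm_add_le _ _).trans ?_
      rw [cnorm_smul, abs_of_pos hβ0]
      exact add_le_add hMx (mul_le_mul_of_nonneg_left hRx hβ0.le)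
    rw [hx]
    refine htri.trans ?_
    have hpow : (1 : ℝ) ≤ ‖A‖ ^ l := one_le_pow₀ hA1.le
    have hxn : 0 ≤ cnorm x := cnorm_nonneg x
    push_cast
    have h1 : ‖A‖ * cnorm x ≤ ‖A‖ * ((1 + β⁻¹ * c * l) * ‖A‖ ^ l) :=
      mul_le_mul_of_nonneg_left hxle (by linarith)
    have hln : (0:ℝ) ≤ (l:ℝ) := Nat.cast_nonneg l
    rw [pow_succ]
    have h2 : β⁻¹ * c * ‖A‖ ^ l ≤ β⁻¹ * c * (‖A‖ ^ l * ‖A‖) := by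
      exact mul_le_mul_of_nonneg_left
        (le_mul_of_one_le_right (pow_nonneg (by linarith) l) hA1.le)
        (mul_pos hβ0 hc).le
    nlinarith [h1, h2]
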